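/- The limit as N → ∞ of the q-Hahn weight W_{√(ξs/κ), s}(N - μ_1, i; N - λ_1 + i, Δ) equals (κs/ξ)^Δ · (κs/ξ;q)_∞/(s²;q)_∞ · (κ^{-1}sξ;q)_Δ/(q;q)_Δ, where Δ = λ_1 - μ_1 is fixed and μ_1 ≤ λ_1; convergence holds for |q| < 1. -/

import Mathlib

/-- The q-Pochhammer symbol `(x;q)_n = ∏_{i=1}^n (1 - x q^{i-1})`. -/
noncomputable def qp (q x : ℂ) (n : ℕ) : ℂ := ∏ r ∈ Finset.range n, (1 - x * q ^ r)

/-- The infinite q-Pochhammer symbol `(x;q)_∞ = ∏_{i=1}^∞ (1 - x q^{i-1})`. -/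
noncomputable def qpInf (q x : ℂ) : ℂ := ∏' n : ℕ, (1 - x * q ^ n)

/-- The q-Hahn weight `W_{√(ξs/κ), s}(i,j;k,l)`, written in terms of
`s²/t² = κs/ξ` and `t² = sξ/κ`. -/
noncomputable def Wk (q κ s ξ : ℂ) (i j k l : ℕ) : ℂ :=
  if i + j = k + l ∧ l ≤ i then
    (κ * s / ξ) ^ l * qp q (κ * s / ξ) (i - l) * qp q (κ⁻¹ * s * ξ) l / qp q (s ^ 2) i *
      (qp q q i / (qp q q (i - l) * qp q q l))
  else 0

lemma summable_log_aux (q x : ℂ) (hq1 : ‖q‖ < 1)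
    (h : ∀ n : ℕ, 1 - x * q ^ n ≠ 0) :
    Summable fun n : ℕ => Complex.log (1 - x * q ^ n) := by
  have hsum : Summable fun n : ℕ => (3/2 : ℝ) * (‖x‖ * ‖q‖ ^ n) := by
    apply Summable.mul_left
    apply Summable.mul_left
    exact summable_geometric_of_lt_one (by positivity) hq1
  apply Summable.of_norm_bounded_eventually_nat hsum
  have h0 : Filter.Tendsto (fun n : ℕ => ‖x‖ * ‖q‖ ^ n)
      Filter.atTop (nhds 0) := by
    simpa using (tendsto_pow_atTop_nhds_zero_of_lt_one (by positivity) hq1).const_mul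
      (‖x‖)
  filter_upwards [h0.eventually_le_const (by norm_num : (0:ℝ) < 1/2)] with n hn
  have hz : ‖(-(x * q ^ n) : ℂ)‖ ≤ 1/2 := by
    simpa [norm_mul, norm_pow] using hn
  have := Complex.norm_log_one_add_half_le_self hz
  rw [show (1 : ℂ) + -(x * q ^ n) = 1 - x * q ^ n by ring] at this
  apply this.trans
  simp [norm_mul, norm_pow]

lemma hasProd_qp (q x : ℂ) (hq1 : ‖q‖ < 1) :
    HasProd (fun n : ℕ => 1 - x * q ^ n) (qpInf q x) := by
  by_cases h : ∀ n : ℕ, 1 - x * q ^ n ≠ 0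
  · have hm : Multipliable fun n : ℕ => 1 - x * q ^ n := by
      have := Complex.multipliable_of_summable_log (summable_log_aux q x hq1 h)
      exact this
    exact hm.hasProd
  · push_neg at h
    obtain ⟨n0, h0⟩ := h
    have hev : ∀ᶠ S : Finset ℕ in Filter.atTop,
        ∏ i ∈ S, (1 - x * q ^ i) = (0 : ℂ) := by
      rw [Filter.eventually_atTop]
      exact ⟨{n0}, fun S hS => Finset.prod_eq_zero (hS (Finset.mem_singleton_self n0)) h0⟩
    have hp : HasProd (fun n : ℕ => 1 - x * q ^ n) 0 := by
      unfold HasProd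
      exact Filter.Tendsto.congr' (Filter.EventuallyEq.symm hev) tendsto_const_nhds
    rwa [qpInf, hp.tprod_eq]

lemma qpInf_ne_zero (q x : ℂ) (hq1 : ‖q‖ < 1)
    (h : ∀ n : ℕ, 1 - x * q ^ n ≠ 0) : qpInf q x ≠ 0 := by
  have := Complex.cexp_tsum_eq_tprod (f := fun n : ℕ => 1 - x * q ^ n)
    (fun n => h n) (summable_log_aux q x hq1 h)
  rw [qpInf, ← this]
  exact Complex.exp_ne_zero _

lemma tendsto_qp (q x : ℂ) (hq1 : ‖q‖ < 1) :
    Filter.Tendsto (fun n : ℕ => qp q x n) Filter.atTop (nhds (qpInf q x)) :=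
  (hasProd_qp q x hq1).tendsto_prod_nat

lemma qterm_ne_zero (q : ℂ) (hq1 : ‖q‖ < 1) (n : ℕ) :
    1 - q * q ^ n ≠ 0 := by
  intro h
  have h1 : q * q ^ n = 1 := by linear_combination -h
  have : ‖q * q ^ n‖ < 1 := by
    rw [norm_mul, norm_pow]
    calc ‖q‖ * ‖q‖ ^ n ≤ ‖q‖ * 1 := by
          exact mul_le_mul_of_nonneg_left (pow_le_one₀ (by positivity) hq1.le) (by positivity)
      _ < 1 := by simpa using hq1
  rw [h1] at this
  simp at this

/-- Limit of the q-Hahn weight: for fixed `Δ = λ₁ - μ₁` and `i`,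
`W_{√(ξs/κ),s}(N-μ₁, i; N-λ₁+i, Δ) → (κs/ξ)^Δ (κs/ξ;q)_∞/(s²;q)_∞ ·
(κ⁻¹sξ;q)_Δ/(q;q)_Δ` as `N → ∞`, for `|q| < 1`. -/
theorem stmt9 (q κ s ξ : ℂ) (hq0 : 0 < ‖q‖) (hq1 : ‖q‖ < 1)
    (hξ : ξ ≠ 0) (hs : ∀ n : ℕ, 1 - s ^ 2 * q ^ n ≠ 0)
    (lam1 mu1 i Δ : ℕ) (hle : mu1 ≤ lam1) (hΔ : Δ = lam1 - mu1) :
    Filter.Tendsto (fun N : ℕ => Wk q κ s ξ (N - mu1) i (N - lam1 + i) Δ) Filter.atTop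
      (nhds ((κ * s / ξ) ^ Δ * qpInf q (κ * s / ξ) / qpInf q (s ^ 2) *
        (qp q (κ⁻¹ * s * ξ) Δ / qp q q Δ))) := by
  set c := κ * s / ξ with hc
  set d := κ⁻¹ * s * ξ with hd
  have hsne : qpInf q (s ^ 2) ≠ 0 := qpInf_ne_zero q (s ^ 2) hq1 hs
  have hqne : qpInf q q ≠ 0 := qpInf_ne_zero q q hq1 (qterm_ne_zero q hq1)
  have hqΔne : qp q q Δ ≠ 0 := by
    rw [qp]
    exact Finset.prod_ne_zero_iff.2 fun r _ => qterm_ne_zero q hq1 r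
  -- eventual form
  have hev : ∀ᶠ N : ℕ in Filter.atTop,
      Wk q κ s ξ (N - mu1) i (N - lam1 + i) Δ =
        c ^ Δ * qp q c (N - lam1) * qp q d Δ / qp q (s ^ 2) (N - mu1) *
          (qp q q (N - mu1) / (qp q q (N - lam1) * qp q q Δ)) := by
    rw [Filter.eventually_atTop]
    refine ⟨lam1, fun N hN => ?_⟩
    have h1 : N - mu1 = (N - lam1) + Δ := by omega
    have h2 : Δ ≤ N - mu1 := by omega
    have h3 : N - mu1 + i = N - lam1 + i + Δ := by omega
    have h4 : N - mu1 - Δ = N - lam1 := by omega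
    rw [Wk, if_pos ⟨h3, h2⟩, h4]
  refine Filter.Tendsto.congr' (Filter.EventuallyEq.symm hev) ?_
  have t1 : Filter.Tendsto (fun N : ℕ => qp q c (N - lam1)) Filter.atTop
      (nhds (qpInf q c)) := (tendsto_qp q c hq1).comp (Filter.tendsto_sub_atTop_nat lam1)
  have t2 : Filter.Tendsto (fun N : ℕ => qp q (s ^ 2) (N - mu1)) Filter.atTop
      (nhds (qpInf q (s ^ 2))) :=
    (tendsto_qp q (s ^ 2) hq1).comp (Filter.tendsto_sub_atTop_nat mu1)
  have t3 : Filter.Tendsto (fun N : ℕ => qp q q (N - mu1)) Filter.atTop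
      (nhds (qpInf q q)) := (tendsto_qp q q hq1).comp (Filter.tendsto_sub_atTop_nat mu1)
  have t4 : Filter.Tendsto (fun N : ℕ => qp q q (N - lam1)) Filter.atTop
      (nhds (qpInf q q)) := (tendsto_qp q q hq1).comp (Filter.tendsto_sub_atTop_nat lam1)
  have main : Filter.Tendsto
      (fun N : ℕ => c ^ Δ * qp q c (N - lam1) * qp q d Δ / qp q (s ^ 2) (N - mu1) *
        (qp q q (N - mu1) / (qp q q (N - lam1) * qp q q Δ))) Filter.atTop
      (nhds (c ^ Δ * qpInf q c * qp q d Δ / qpInf q (s ^ 2) *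
        (qpInf q q / (qpInf q q * qp q q Δ)))) := by
    exact ((((tendsto_const_nhds.mul t1).mul tendsto_const_nhds).div t2 hsne).mul
      ((t3.div ((t4.mul tendsto_const_nhds)) (mul_ne_zero hqne hqΔne))))
  convert main using 2
  field_simp
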